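/- Let r : ℂ → ℝ be a C² function of constant width w, and assume the functions r+ψ, (r+ψ)² − |σ|², and |σ|² − (r − w/2 + ψ)² are μ-integrable. For C > −w/2 define A(C) = ∫ℂ ((r + C + ψ)² − |σ|²) dμ and I(C) = 6·((1/2)(w+2C)·A(C) − (π/3)(w+2C)³) / (π(w+2C)³). If ∫ℂ (|σ|² − (r − w/2 + ψ)²) dμ ≥ 0, then I is monotone nondecreasing on (−w/2, ∞): for all −w/2 < C₁ ≤ C₂, I(C₁) ≤ I(C₂). -/

import Mathlib

open Complex MeasureTheory ComplexConjugate

noncomputable section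

/-- Wirtinger derivative ∂/∂ξ of a complex-valued function. -/
def wd (f : ℂ → ℂ) (ξ : ℂ) : ℂ :=
  (1 / 2) * (fderiv ℝ f ξ 1 - Complex.I * fderiv ℝ f ξ Complex.I)

/-- Wirtinger derivative ∂/∂ξ̄ of a real-valued function, as a complex number. -/
def wdbarR (r : ℂ → ℝ) (ξ : ℂ) : ℂ :=
  (1 / 2) * ((fderiv ℝ r ξ 1 : ℝ) + Complex.I * (fderiv ℝ r ξ Complex.I : ℝ))

/-- F = (1/2)(1+|ξ|²)² ∂r/∂ξ̄. -/
def Fcong (r : ℂ → ℝ) (ξ : ℂ) : ℂ :=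
  (1 / 2) * ((1 + Complex.normSq ξ) ^ 2 : ℝ) * wdbarR r ξ

/-- ψ = (1+|ξ|²)² ∂/∂ξ [F/(1+|ξ|²)²] (real-valued). -/
def psiSlope (r : ℂ → ℝ) (ξ : ℂ) : ℝ :=
  (((1 + Complex.normSq ξ) ^ 2 : ℝ) *
    wd (fun z => Fcong r z / (((1 + Complex.normSq z) ^ 2 : ℝ) : ℂ)) ξ).re

/-- σ = −∂(conj F)/∂ξ. -/
def sigmaSlope (r : ℂ → ℝ) (ξ : ℂ) : ℂ :=
  - wd (fun z => conj (Fcong r z)) ξ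

/-- The round sphere area measure in the stereographic coordinate. -/
def muSphere : Measure ℂ :=
  volume.withDensity fun ξ => ENNReal.ofReal (4 / (1 + Complex.normSq ξ) ^ 2)

/-- Constant width w: r(ξ) + r(−1/conj ξ) = w for all ξ ≠ 0. -/
def ConstWidth (r : ℂ → ℝ) (w : ℝ) : Prop :=
  ∀ ξ : ℂ, ξ ≠ 0 → r ξ + r (-1 / conj ξ) = w



/-- antipodal map -/
def amap (ξ : ℂ) : ℂ := -1 / conj ξ

/-- derivative of amap at x -/
def DA (x : ℂ) : ℂ →L[ℝ] ℂ := (((conj x) ^ 2)⁻¹ : ℂ) • (conjCLE : ℂ →L[ℝ] ℂ)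

lemma DA_apply (x v : ℂ) : DA x v = ((conj x) ^ 2)⁻¹ * conj v := by
  simp [DA]

lemma hasFDerivAt_amap {x : ℂ} (hx : x ≠ 0) : HasFDerivAt amap (DA x) x := by
  have hconj : HasFDerivAt (fun z : ℂ => conj z) (conjCLE : ℂ →L[ℝ] ℂ) x := by
    exact (conjCLE : ℂ →L[ℝ] ℂ).hasFDerivAt (x := x)
  have hcx : (conj x) ≠ 0 := by simpa using hx
  have hinv : HasDerivAt (fun y : ℂ => -y⁻¹) (((conj x) ^ 2)⁻¹) (conj x) := by
    have h := (hasDerivAt_inv hcx).fun_neg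
    simp only [neg_neg] at h
    exact h
  have := (hinv.hasFDerivAt.restrictScalars ℝ).comp x hconj
  have heq : amap = (fun y : ℂ => -y⁻¹) ∘ (fun z : ℂ => conj z) := by
    funext z; simp [amap, neg_div, Function.comp, one_div]
  rw [← heq] at this
  refine this.congr_fderiv ?_
  ext v
  simp [DA, mul_comm]

lemma det_DA (x : ℂ) : (DA x).det = -((Complex.normSq x) ^ 2)⁻¹ := by
  have h1 : (DA x).toLinearMap
      = (Algebra.lmul ℝ ℂ (((conj x) ^ 2)⁻¹ : ℂ)).comp conjAe.toLinearMap := by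
    ext v
    simp [DA, Algebra.lmul]
  have : (DA x).det = LinearMap.det ((Algebra.lmul ℝ ℂ (((conj x) ^ 2)⁻¹ : ℂ)).comp
      conjAe.toLinearMap) := by
    rw [ContinuousLinearMap.det, h1]
  rw [this, LinearMap.det_comp, Complex.det_conjAe]
  have : LinearMap.det (Algebra.lmul ℝ ℂ (((conj x) ^ 2)⁻¹ : ℂ))
      = Complex.normSq (((conj x) ^ 2)⁻¹ : ℂ) := by
    rw [← Algebra.norm_complex_apply]; rfl
  rw [this]
  simp [map_inv₀, map_pow, Complex.normSq_conj]

lemma amap_amap {x : ℂ} (hx : x ≠ 0) : amap (amap x) = x := by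
  have hcx : (conj x) ≠ 0 := by simpa using hx
  simp only [amap]
  rw [map_div₀]
  simp only [map_neg, map_one, Complex.conj_conj]
  field_simp

lemma amap_ne_zero {x : ℂ} (hx : x ≠ 0) : amap x ≠ 0 := by
  have hcx : (conj x) ≠ 0 := by simpa using hx
  simp only [amap]
  exact div_ne_zero (by norm_num) hcx

lemma normSq_amap {x : ℂ} (hx : x ≠ 0) : Complex.normSq (amap x) = (Complex.normSq x)⁻¹ := by
  simp only [amap]
  rw [map_div₀]
  simp [Complex.normSq_conj]

lemma amap_image : amap '' {(0:ℂ)}ᶜ = {(0:ℂ)}ᶜ := by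
  apply Set.Subset.antisymm
  · rintro y ⟨x, hx, rfl⟩
    exact amap_ne_zero hx
  · intro y hy
    exact ⟨amap y, amap_ne_zero hy, amap_amap hy⟩

lemma amap_injOn : Set.InjOn amap {(0:ℂ)}ᶜ := by
  intro x hx y hy h
  have := congrArg amap h
  rwa [amap_amap hx, amap_amap hy] at this


/-- flat Laplacian -/
def lap (r : ℂ → ℝ) (z : ℂ) : ℝ :=
  fderiv ℝ (fun w => fderiv ℝ r w 1) z 1 + fderiv ℝ (fun w => fderiv ℝ r w Complex.I) z Complex.I

variable {r : ℂ → ℝ}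

lemma contDiff_fderiv (hr : ContDiff ℝ 2 r) : ContDiff ℝ 1 (fderiv ℝ r) :=
  hr.fderiv_right (by norm_num)

lemma hasFDerivAt_fderiv_apply (hr : ContDiff ℝ 2 r) (ξ v : ℂ) :
    HasFDerivAt (fun w => fderiv ℝ r w v) ((fderiv ℝ (fderiv ℝ r) ξ).flip v) ξ := by
  have hd : DifferentiableAt ℝ (fderiv ℝ r) ξ :=
    (contDiff_fderiv hr).differentiable (by norm_num) ξ
  simpa using hd.hasFDerivAt.clm_apply (hasFDerivAt_const v ξ)

lemma lap_eq (hr : ContDiff ℝ 2 r) (ξ : ℂ) :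
    lap r ξ = fderiv ℝ (fderiv ℝ r) ξ 1 1 + fderiv ℝ (fderiv ℝ r) ξ Complex.I Complex.I := by
  rw [lap, (hasFDerivAt_fderiv_apply hr ξ 1).fderiv,
    (hasFDerivAt_fderiv_apply hr ξ Complex.I).fderiv]
  rfl

lemma hasFDerivAt_wdbarR (hr : ContDiff ℝ 2 r) (ξ : ℂ) :
    HasFDerivAt (wdbarR r)
      ((1/2 : ℂ) • (Complex.ofRealCLM.comp ((fderiv ℝ (fderiv ℝ r) ξ).flip 1)
        + Complex.I • (Complex.ofRealCLM.comp ((fderiv ℝ (fderiv ℝ r) ξ).flip Complex.I)))) ξ := by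
  have hA' : HasFDerivAt (fun w => ((fderiv ℝ r w 1 : ℝ) : ℂ))
      (Complex.ofRealCLM.comp ((fderiv ℝ (fderiv ℝ r) ξ).flip 1)) ξ :=
    Complex.ofRealCLM.hasFDerivAt.comp ξ (hasFDerivAt_fderiv_apply hr ξ 1)
  have hB' : HasFDerivAt (fun w => ((fderiv ℝ r w Complex.I : ℝ) : ℂ))
      (Complex.ofRealCLM.comp ((fderiv ℝ (fderiv ℝ r) ξ).flip Complex.I)) ξ :=
    Complex.ofRealCLM.hasFDerivAt.comp ξ (hasFDerivAt_fderiv_apply hr ξ Complex.I)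
  exact (hA'.add (hB'.const_mul Complex.I)).const_mul ((1:ℂ)/2)

lemma psi_eq (hr : ContDiff ℝ 2 r) (ξ : ℂ) :
    psiSlope r ξ = (1/8) * (1 + Complex.normSq ξ)^2 * lap r ξ := by
  have hw := hasFDerivAt_wdbarR hr ξ
  set B2 := fderiv ℝ (fderiv ℝ r) ξ with hB2
  have hfun : (fun z => Fcong r z / (((1 + Complex.normSq z) ^ 2 : ℝ) : ℂ))
      = fun z => (1/2 : ℂ) * wdbarR r z := by
    funext z
    have hz : (((1 + Complex.normSq z) ^ 2 : ℝ) : ℂ) ≠ 0 := by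
      simp only [ne_eq, Complex.ofReal_eq_zero]
      have := Complex.normSq_nonneg z
      exact pow_ne_zero 2 (by nlinarith)
    rw [Fcong]
    rw [show (1/2 : ℂ) * (((1 + Complex.normSq z) ^ 2 : ℝ) : ℂ) * wdbarR r z
        = (((1 + Complex.normSq z) ^ 2 : ℝ) : ℂ) * ((1/2 : ℂ) * wdbarR r z) by ring]
    exact mul_div_cancel_left₀ _ hz
  have hwd_cm : wd (fun z => (1/2:ℂ) * wdbarR r z) ξ = (1/2:ℂ) * wd (wdbarR r) ξ := by
    unfold wd
    rw [fderiv_const_mul hw.differentiableAt]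
    simp only [ContinuousLinearMap.smul_apply, smul_eq_mul]
    ring
  have hwdval : wd (wdbarR r) ξ
      = (1/4 : ℂ) * (((B2 1 1 + B2 Complex.I Complex.I : ℝ) : ℂ)
        + Complex.I * (((B2 1 Complex.I - B2 Complex.I 1 : ℝ) : ℂ))) := by
    rw [wd, hw.fderiv]
    simp only [ContinuousLinearMap.smul_apply, ContinuousLinearMap.add_apply,
      ContinuousLinearMap.comp_apply, ContinuousLinearMap.flip_apply,
      Complex.ofRealCLM_apply, smul_eq_mul, Complex.ofReal_add, Complex.ofReal_sub]
    linear_combination (-(1:ℂ)/4 * ((B2 Complex.I Complex.I : ℝ):ℂ)) * Complex.I_sq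
  have hre : ∀ (K s t : ℝ), (((K:ℝ) : ℂ) * ((1/2 : ℂ) * ((1/4:ℂ) * ((s:ℂ) + Complex.I * (t:ℂ))))).re
      = K * (1/8) * s := by
    intro K s t
    simp [Complex.mul_re, Complex.mul_im]
    ring
  rw [psiSlope, hfun, hwd_cm, hwdval, hre, lap_eq hr ξ]
  ring
variable {w : ℝ}

lemma bilin_exp (B : ℂ →L[ℝ] ℂ →L[ℝ] ℝ) (u : ℂ) :
    B u u + B (Complex.I * u) (Complex.I * u)
      = Complex.normSq u * (B 1 1 + B Complex.I Complex.I) := by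
  have key : ∀ p q : ℝ, B (p • (1:ℂ) + q • Complex.I) (p • (1:ℂ) + q • Complex.I)
      + B ((-q) • (1:ℂ) + p • Complex.I) ((-q) • (1:ℂ) + p • Complex.I)
      = (p^2+q^2) * (B 1 1 + B Complex.I Complex.I) := by
    intro p q
    simp only [map_add, _root_.map_smul, ContinuousLinearMap.add_apply,
      ContinuousLinearMap.smul_apply, smul_eq_mul]
    ring
  have h1 : (u.re : ℝ) • (1:ℂ) + (u.im : ℝ) • Complex.I = u := by
    simp [Complex.real_smul, Complex.re_add_im]
  have h2 : (-(u.im) : ℝ) • (1:ℂ) + (u.re : ℝ) • Complex.I = Complex.I * u := by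
    simp [Complex.real_smul, Complex.ext_iff]
  calc B u u + B (Complex.I * u) (Complex.I * u)
      = B ((u.re : ℝ) • (1:ℂ) + (u.im : ℝ) • Complex.I)
          ((u.re : ℝ) • (1:ℂ) + (u.im : ℝ) • Complex.I)
        + B ((-(u.im) : ℝ) • (1:ℂ) + (u.re : ℝ) • Complex.I)
          ((-(u.im) : ℝ) • (1:ℂ) + (u.re : ℝ) • Complex.I) := by rw [h1, h2]
    _ = (u.re^2 + u.im^2) * (B 1 1 + B Complex.I Complex.I) := key u.re u.im
    _ = Complex.normSq u * (B 1 1 + B Complex.I Complex.I) := by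
        rw [Complex.normSq_apply]; ring

lemma lap_comp (hr : ContDiff ℝ 2 r) {x : ℂ} (hx : x ≠ 0) :
    lap (fun z => r (amap z)) x = ((Complex.normSq x) ^ 2)⁻¹ * lap r (amap x) := by
  have hdr : Differentiable ℝ r := hr.differentiable (by norm_num)
  have hdfr : Differentiable ℝ (fderiv ℝ r) := (contDiff_fderiv hr).differentiable (by norm_num)
  have hcx : (conj x) ≠ 0 := by simpa using hx
  have hfd1 : ∀ z : ℂ, z ≠ 0 →
      HasFDerivAt (fun y => r (amap y)) ((fderiv ℝ r (amap z)).comp (DA z)) z :=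
    fun z hz => (hdr (amap z)).hasFDerivAt.comp z (hasFDerivAt_amap hz)
  have main : ∀ v : ℂ, fderiv ℝ (fun w => fderiv ℝ (fun y => r (amap y)) w v) x v
      = (fderiv ℝ (fderiv ℝ r) (amap x)) (DA x v) (DA x v)
        + (fderiv ℝ r (amap x)) (conj v * conj v * (-2 * ((conj x)^3)⁻¹)) := by
    intro v
    have hev : (fun w => fderiv ℝ (fun y => r (amap y)) w v)
        =ᶠ[nhds x] (fun w => (fderiv ℝ r (amap w)) (((conj w)^2)⁻¹ * conj v)) := by
      filter_upwards [isOpen_compl_singleton.mem_nhds hx] with z hz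
      rw [(hfd1 z hz).fderiv]
      simp [DA_apply]
    rw [hev.fderiv_eq]
    have hG : HasFDerivAt (fun z => fderiv ℝ r (amap z))
        ((fderiv ℝ (fderiv ℝ r) (amap x)).comp (DA x)) x :=
      (hdfr (amap x)).hasFDerivAt.comp x (hasFDerivAt_amap hx)
    have hu : HasFDerivAt (fun z : ℂ => ((conj z)^2)⁻¹ * conj v)
        (((-2 * ((conj x)^3)⁻¹ * conj v : ℂ)) • (conjCLE : ℂ →L[ℝ] ℂ)) x := by
      have hin : HasDerivAt (fun y : ℂ => (y^2)⁻¹ * conj v)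
          (-2 * ((conj x)^3)⁻¹ * conj v) (conj x) := by
        have h0 := (hasDerivAt_zpow (-2) (conj x) (Or.inl hcx)).mul_const (conj v)
        have e1 : (fun y : ℂ => y ^ (-2 : ℤ) * conj v) = fun y : ℂ => (y^2)⁻¹ * conj v := by
          funext y
          rw [show (-2 : ℤ) = -((2:ℕ):ℤ) by norm_num, zpow_neg, zpow_natCast]
        rw [e1] at h0
        refine h0.congr_deriv ?_
        rw [show (-2 - 1 : ℤ) = -((3:ℕ):ℤ) by norm_num, zpow_neg, zpow_natCast]
        push_cast
        ring
      have hconj : HasFDerivAt (fun z : ℂ => conj z) (conjCLE : ℂ →L[ℝ] ℂ) x := by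
        exact (conjCLE : ℂ →L[ℝ] ℂ).hasFDerivAt (x := x)
      have h2 := (hin.hasFDerivAt.restrictScalars ℝ).comp x hconj
      have hCLM : ((ContinuousLinearMap.toSpanSingleton ℂ
            (-2 * ((conj x)^3)⁻¹ * conj v)).restrictScalars ℝ).comp (conjCLE : ℂ →L[ℝ] ℂ)
          = ((-2 * ((conj x)^3)⁻¹ * conj v : ℂ)) • (conjCLE : ℂ →L[ℝ] ℂ) := by
        ext v'
        simp
        ring
      rw [hCLM] at h2
      exact h2
    have htot := hG.clm_apply hu
    rw [htot.fderiv]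
    simp only [ContinuousLinearMap.add_apply, ContinuousLinearMap.coe_comp',
      Function.comp_apply, ContinuousLinearMap.flip_apply, ContinuousLinearMap.smul_apply,
      ContinuousLinearMap.coe_smul', Pi.smul_apply, smul_eq_mul, DA_apply,
      ContinuousLinearEquiv.coe_coe, Complex.conjCLE_apply]
    rw [add_comm]
    congr 1
    congr 1
    ring
  have hlapc : lap (fun z => r (amap z)) x
      = (fderiv ℝ (fderiv ℝ r) (amap x)) (DA x 1) (DA x 1)
        + (fderiv ℝ (fderiv ℝ r) (amap x)) (DA x Complex.I) (DA x Complex.I)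
        + ((fderiv ℝ r (amap x)) (conj 1 * conj 1 * (-2 * ((conj x)^3)⁻¹))
          + (fderiv ℝ r (amap x)) (conj Complex.I * conj Complex.I * (-2 * ((conj x)^3)⁻¹))) := by
    rw [lap, main 1, main Complex.I]
    ring
  have hzero : (fderiv ℝ r (amap x)) (conj 1 * conj 1 * (-2 * ((conj x)^3)⁻¹))
      + (fderiv ℝ r (amap x)) (conj Complex.I * conj Complex.I * (-2 * ((conj x)^3)⁻¹)) = 0 := by
    rw [← map_add]
    have : (conj 1 * conj 1 * (-2 * ((conj x)^3)⁻¹) : ℂ)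
        + conj Complex.I * conj Complex.I * (-2 * ((conj x)^3)⁻¹) = 0 := by
      simp only [map_one, Complex.conj_I, one_mul, neg_mul_neg, Complex.I_mul_I]
      ring
    rw [this, map_zero]
  set B := fderiv ℝ (fderiv ℝ r) (amap x) with hB
  set q : ℂ := ((conj x)^2)⁻¹ with hq
  have hDA1 : DA x 1 = q := by rw [DA_apply]; simp; rfl
  have hDAI : DA x Complex.I = -(Complex.I * q) := by rw [DA_apply]; simp [Complex.conj_I]; ring
  have hBII : B (DA x Complex.I) (DA x Complex.I) = B (Complex.I * q) (Complex.I * q) := by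
    rw [hDAI, map_neg]
    simp
  rw [hlapc, hzero, add_zero, hDA1, hBII, bilin_exp B q, lap_eq hr (amap x)]
  have hnq : Complex.normSq q = ((Complex.normSq x)^2)⁻¹ := by
    rw [hq, map_inv₀, map_pow, Complex.normSq_conj]
  rw [hnq]

lemma lap_congr_open {f g : ℂ → ℝ} {s : Set ℂ} (hs : IsOpen s) (heq : Set.EqOn f g s)
    {x : ℂ} (hx : x ∈ s) : lap f x = lap g x := by
  have hfd : ∀ z ∈ s, fderiv ℝ f z = fderiv ℝ g z := by
    intro z hz
    apply Filter.EventuallyEq.fderiv_eq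
    filter_upwards [hs.mem_nhds hz] with y hy using heq hy
  have h1 : (fun w => fderiv ℝ f w 1) =ᶠ[nhds x] (fun w => fderiv ℝ g w 1) := by
    filter_upwards [hs.mem_nhds hx] with y hy
    rw [hfd y hy]
  have h2 : (fun w => fderiv ℝ f w Complex.I) =ᶠ[nhds x] (fun w => fderiv ℝ g w Complex.I) := by
    filter_upwards [hs.mem_nhds hx] with y hy
    rw [hfd y hy]
  rw [lap, lap, h1.fderiv_eq, h2.fderiv_eq]

lemma lap_const_sub (r : ℂ → ℝ) (w : ℝ) (x : ℂ) :
    lap (fun z => w - r z) x = - lap r x := by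
  have h1 : (fun y => fderiv ℝ (fun z => w - r z) y 1) = fun y => -(fderiv ℝ r y 1) := by
    funext y; rw [fderiv_const_sub]; simp
  have h2 : (fun y => fderiv ℝ (fun z => w - r z) y Complex.I)
      = fun y => -(fderiv ℝ r y Complex.I) := by
    funext y; rw [fderiv_const_sub]; simp
  rw [lap, lap, h1, h2]
  have hn1 : fderiv ℝ (fun y => -(fderiv ℝ r y 1)) x = -fderiv ℝ (fun y => fderiv ℝ r y 1) x :=
    fderiv_neg
  have hn2 : fderiv ℝ (fun y => -(fderiv ℝ r y Complex.I)) x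
      = -fderiv ℝ (fun y => fderiv ℝ r y Complex.I) x := fderiv_neg
  rw [hn1, hn2]
  simp
  ring

lemma lap_antisym (hr : ContDiff ℝ 2 r) (hcw : ConstWidth r w) {x : ℂ} (hx : x ≠ 0) :
    lap r (amap x) = -((Complex.normSq x)^2) * lap r x := by
  have heq : Set.EqOn (fun z => r (amap z)) (fun z => w - r z) {(0:ℂ)}ᶜ := by
    intro z hz
    have := hcw z hz
    simp only [amap]
    simp only [Set.mem_compl_iff, Set.mem_singleton_iff] at hz
    linarith
  have h1 : lap (fun z => r (amap z)) x = - lap r x := by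
    rw [lap_congr_open isOpen_compl_singleton heq hx, lap_const_sub]
  have h2 := lap_comp hr hx
  rw [h1] at h2
  have hns : (Complex.normSq x)^2 ≠ 0 := by
    have := Complex.normSq_pos.mpr hx
    positivity
  field_simp at h2
  rw [eq_div_iff hns] at h2
  linarith [h2]


lemma rpsi_antisym {r : ℂ → ℝ} {w : ℝ} (hr : ContDiff ℝ 2 r) (hcw : ConstWidth r w)
    {x : ℂ} (hx : x ≠ 0) :
    (r x + psiSlope r x) + (r (amap x) + psiSlope r (amap x)) = w := by
  have h1 : r x + r (amap x) = w := hcw x hx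
  have h2 : psiSlope r (amap x) = - psiSlope r x := by
    rw [psi_eq hr, psi_eq hr, normSq_amap hx, lap_antisym hr hcw hx]
    have hns : Complex.normSq x ≠ 0 := ne_of_gt (Complex.normSq_pos.mpr hx)
    field_simp
    ring
  rw [h2]
  linarith

def rho (ξ : ℂ) : ℝ := 4 / (1 + Complex.normSq ξ) ^ 2

lemma one_add_normSq_pos (ξ : ℂ) : (0:ℝ) < 1 + Complex.normSq ξ :=
  add_pos_of_pos_of_nonneg one_pos (Complex.normSq_nonneg ξ)

lemma rho_pos (ξ : ℂ) : 0 < rho ξ := by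
  have := one_add_normSq_pos ξ
  rw [rho]; positivity

lemma continuous_rho : Continuous rho := by
  apply continuous_const.div
  · exact (continuous_const.add Complex.continuous_normSq).pow 2
  · intro ξ
    exact pow_ne_zero 2 (ne_of_gt (one_add_normSq_pos ξ))

lemma integrable_rho : Integrable rho := by
  have h2 : ((Module.finrank ℝ ℂ : ℝ)) < 4 := by
    rw [Complex.finrank_real_complex]; norm_num
  refine ((integrable_one_add_norm (E := ℂ) h2).const_mul 16).mono'
    continuous_rho.aestronglyMeasurable ?_
  filter_upwards with ξ
  have hn : (0:ℝ) ≤ ‖ξ‖ := norm_nonneg ξ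
  have hns : Complex.normSq ξ = ‖ξ‖^2 := by
    rw [Complex.normSq_eq_norm_sq]
  have hrpow : (1 + ‖ξ‖) ^ (-4 : ℝ) = ((1 + ‖ξ‖)^(4:ℕ))⁻¹ := by
    rw [show (-4:ℝ) = -((4:ℕ):ℝ) by norm_num, Real.rpow_neg (by linarith), Real.rpow_natCast]
  rw [Real.norm_eq_abs, abs_of_pos (rho_pos ξ), hrpow, rho, hns]
  rw [div_le_iff₀ (by positivity), mul_comm (16:ℝ), mul_assoc, inv_mul_eq_div,
    le_div_iff₀ (by positivity)]
  nlinarith [sq_nonneg (1 - ‖ξ‖), sq_nonneg ‖ξ‖, sq_nonneg (1 - ‖ξ‖^2), sq_nonneg (‖ξ‖ - ‖ξ‖^2)]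

lemma integral_radial : ∫ x in Set.Ioi (0:ℝ), x * (4 / (1 + x^2)^2) = 2 := by
  have hderiv : ∀ x ∈ Set.Ioi (0:ℝ), HasDerivAt (fun y : ℝ => -2 / (1 + y^2))
      (x * (4 / (1 + x^2)^2)) x := by
    intro x _
    have h1 : HasDerivAt (fun y : ℝ => 1 + y^2) (2*x) x := by
      simpa using ((hasDerivAt_pow 2 x).const_add 1)
    have h2 := (h1.inv (ne_of_gt (by positivity))).const_mul (-2 : ℝ)
    rw [show (fun y : ℝ => -2 / (1 + y^2)) = fun y => -2 * (fun y : ℝ => 1 + y ^ 2)⁻¹ y by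
      funext y; simp [div_eq_mul_inv]]
    refine h2.congr_deriv ?_
    ring
  have hcont : ContinuousWithinAt (fun y : ℝ => -2 / (1 + y^2)) (Set.Ici 0) 0 := by
    apply Continuous.continuousWithinAt
    apply continuous_const.div
    · exact (continuous_const.add (continuous_id.pow 2))
    · intro y; positivity
  have htend : Filter.Tendsto (fun y : ℝ => -2 / (1 + y^2)) Filter.atTop (nhds 0) := by
    have h1 : Filter.Tendsto (fun y : ℝ => 1 + y^2) Filter.atTop Filter.atTop :=
      Filter.tendsto_atTop_add_const_left Filter.atTop 1 (Filter.tendsto_pow_atTop two_ne_zero)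
    have h2 := h1.inv_tendsto_atTop
    have := h2.const_mul (-2 : ℝ)
    simpa [div_eq_mul_inv] using this
  have hint : IntegrableOn (fun x : ℝ => x * (4 / (1 + x^2)^2)) (Set.Ioi 0) := by
    have h3 : ((Module.finrank ℝ ℝ : ℝ)) < 3 := by norm_num [Module.finrank_self]
    refine (((integrable_one_add_norm (E := ℝ) h3).const_mul 16).integrableOn).mono'
      ((continuous_id.mul (continuous_const.div
        ((continuous_const.add (continuous_id.pow 2)).pow 2)
        (fun y => by simp only [Pi.pow_apply, Pi.add_apply, id]; positivity))).aestronglyMeasurable) ?_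
    rw [ae_restrict_iff' measurableSet_Ioi]
    filter_upwards with x hx
    have hx0 : (0:ℝ) < x := hx
    have hrpow : (1 + ‖x‖) ^ (-3 : ℝ) = ((1 + x)^(3:ℕ))⁻¹ := by
      rw [Real.norm_eq_abs, abs_of_pos hx0,
        show (-3:ℝ) = -((3:ℕ):ℝ) by norm_num, Real.rpow_neg (by linarith), Real.rpow_natCast]
    rw [Real.norm_eq_abs, abs_of_pos (by positivity), hrpow]
    rw [show x * (4/(1+x^2)^2) = 4*x/((1+x^2)^2) by ring,
      show (16:ℝ) * ((1+x)^3)⁻¹ = 16/(1+x)^3 by ring,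
      div_le_div_iff₀ (by positivity) (by positivity)]
    nlinarith [sq_nonneg (1-x), sq_nonneg (x - x^2), sq_nonneg (1 - x^2), hx0.le, sq_nonneg x]
  have := integral_Ioi_of_hasDerivAt_of_tendsto hcont hderiv hint htend
  rw [this]
  norm_num

lemma integral_rho : ∫ ξ : ℂ, rho ξ = 4 * Real.pi := by
  rw [← Complex.integral_comp_polarCoord_symm rho]
  have htgt : polarCoord.target = Set.Ioi (0:ℝ) ×ˢ Set.Ioo (-Real.pi) Real.pi := rfl
  have hms : MeasurableSet polarCoord.target := by
    rw [htgt]; exact measurableSet_Ioi.prod measurableSet_Ioo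
  have hpt : Set.EqOn (fun p : ℝ × ℝ => p.1 • rho (Complex.polarCoord.symm p))
      (fun p : ℝ × ℝ => (p.1 * (4 / (1 + p.1^2)^2)) * (fun _ : ℝ => (1:ℝ)) p.2)
      polarCoord.target := by
    intro p hp
    have habs : ‖Complex.polarCoord.symm p‖ = |p.1| := Complex.norm_polarCoord_symm p
    have hns : Complex.normSq (Complex.polarCoord.symm p) = p.1^2 := by
      rw [Complex.normSq_eq_norm_sq, habs, _root_.sq_abs]
    simp only [smul_eq_mul, rho, hns]
    ring
  rw [setIntegral_congr_fun hms hpt, htgt, Measure.volume_eq_prod ℝ ℝ,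
    setIntegral_prod_mul (fun x : ℝ => x * (4 / (1 + x^2)^2)) (fun _ : ℝ => (1:ℝ))]
  rw [integral_radial]
  rw [setIntegral_const]
  rw [measureReal_def, Real.volume_Ioo]
  rw [smul_eq_mul, mul_one, ENNReal.toReal_ofReal (by linarith [Real.pi_pos])]
  ring

lemma muSphere_univ : muSphere Set.univ = ENNReal.ofReal (4 * Real.pi) := by
  rw [muSphere, withDensity_apply _ MeasurableSet.univ, Measure.restrict_univ]
  show ∫⁻ a : ℂ, ENNReal.ofReal (rho a) = _
  rw [← ofReal_integral_eq_lintegral_ofReal integrable_rho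
      (Filter.Eventually.of_forall (fun ξ => (rho_pos ξ).le)), integral_rho]

instance : IsFiniteMeasure muSphere :=
  ⟨by rw [muSphere_univ]; exact ENNReal.ofReal_lt_top⟩

lemma muSphere_univ_toReal : (muSphere Set.univ).toReal = 4 * Real.pi := by
  rw [muSphere_univ, ENNReal.toReal_ofReal (by positivity)]

lemma measurable_rho_nnreal : Measurable fun ξ : ℂ => (rho ξ).toNNReal :=
  continuous_rho.measurable.real_toNNReal

lemma muSphere_eq : muSphere = volume.withDensity (fun ξ => ((rho ξ).toNNReal : ENNReal)) := by
  rfl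

lemma smul_eq_rho_mul (h : ℂ → ℝ) :
    (fun x => (rho x).toNNReal • h x) = fun x => rho x * h x := by
  funext x
  rw [NNReal.smul_def, Real.coe_toNNReal _ (rho_pos x).le, smul_eq_mul]

lemma key_integral (w : ℝ) (g : ℂ → ℝ) (hgi : Integrable g muSphere)
    (hg_anti : ∀ x : ℂ, x ≠ 0 → g x + g (amap x) = w) :
    ∫ ξ, g ξ ∂muSphere = 2 * Real.pi * w := by
  set s : Set ℂ := {(0:ℂ)}ᶜ with hsdef
  have hms : MeasurableSet s := (measurableSet_singleton _).compl
  have haes : ∀ᵐ x : ℂ ∂volume, x ∈ s := by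
    rw [ae_iff]
    simp only [hsdef, Set.mem_compl_iff, Set.mem_singleton_iff, not_not]
    have : {a : ℂ | a = 0} = {(0:ℂ)} := by ext a; simp
    rw [this]
    exact measure_singleton 0
  have hres : volume.restrict s = volume := Measure.restrict_eq_self_of_ae_mem haes
  have hint : Integrable (fun x => rho x * g x) volume := by
    rw [← smul_eq_rho_mul]
    rw [muSphere_eq] at hgi
    exact (integrable_withDensity_iff_integrable_smul measurable_rho_nnreal).mp hgi
  have hIeq : ∫ ξ, g ξ ∂muSphere = ∫ x, rho x * g x := by
    rw [muSphere_eq, integral_withDensity_eq_integral_smul measurable_rho_nnreal,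
      smul_eq_rho_mul]
  have hderiv : ∀ x ∈ s, HasFDerivWithinAt amap (DA x) s x :=
    fun x hx => (hasFDerivAt_amap hx).hasFDerivWithinAt
  have hpt : Set.EqOn (fun x => |(DA x).det| • (rho (amap x) * g (amap x)))
      (fun x => rho x * g (amap x)) s := by
    intro x hx
    have hx0 : x ≠ 0 := hx
    have hns : Complex.normSq x ≠ 0 := ne_of_gt (Complex.normSq_pos.mpr hx0)
    have h1p : (1:ℝ) + Complex.normSq x ≠ 0 := ne_of_gt (one_add_normSq_pos x)
    dsimp only
    rw [det_DA, abs_neg, abs_inv, _root_.abs_of_nonneg (by positivity), smul_eq_mul]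
    rw [show rho (amap x) = 4 / (1 + Complex.normSq (amap x))^2 from rfl, normSq_amap hx0,
      show rho x = 4 / (1 + Complex.normSq x)^2 from rfl,
      show (1 + (Complex.normSq x)⁻¹) = (1 + Complex.normSq x)/Complex.normSq x by
        rw [eq_div_iff hns]; field_simp; ring,
      div_pow, div_div_eq_mul_div,
      show (4:ℝ) * Complex.normSq x^2 / (1 + Complex.normSq x)^2
        = Complex.normSq x^2 * (4/(1 + Complex.normSq x)^2) by ring,
      ← mul_assoc, ← mul_assoc, inv_mul_cancel₀ (pow_ne_zero 2 hns), one_mul]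
  have hCoV := integral_image_eq_integral_abs_det_fderiv_smul volume hms hderiv amap_injOn
    (fun x => rho x * g x)
  rw [amap_image] at hCoV
  have hint2 : IntegrableOn (fun x => rho x * g (amap x)) s volume := by
    have hiff := integrableOn_image_iff_integrableOn_abs_det_fderiv_smul volume hms hderiv
      amap_injOn (fun x => rho x * g x)
    rw [amap_image] at hiff
    exact (hiff.mp hint.integrableOn).congr_fun hpt hms
  have hI1 : ∫ x in s, rho x * g x = ∫ x in s, rho x * g (amap x) := by
    rw [hCoV]
    exact setIntegral_congr_fun hms hpt
  have hsum : (∫ x in s, rho x * g x) + (∫ x in s, rho x * g (amap x))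
      = ∫ x in s, rho x * w := by
    rw [← integral_add hint.integrableOn hint2]
    apply setIntegral_congr_fun hms
    intro x hx
    dsimp only
    rw [← mul_add, hg_anti x hx]
  have hrhs : ∫ x in s, rho x * w = 4 * Real.pi * w := by
    rw [integral_mul_const, hres, integral_rho]
  have : (2:ℝ) * ∫ x in s, rho x * g x = 4 * Real.pi * w := by
    rw [two_mul]
    nth_rewrite 2 [hI1]
    rw [hsum, hrhs]
  rw [hIeq, ← hres]
  linarith [this]

/-- Theorem `t:flow`: shrinking a constant width surface along its
normal lines decreases the ratio of enclosed volume to the volume of the ball of the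
same width; equivalently `I(C)` is monotone nondecreasing in the shift parameter `C`. -/
theorem ratio_monotone_along_normal_flow
    (r : ℂ → ℝ) (w : ℝ) (hr : ContDiff ℝ 2 r) (hcw : ConstWidth r w)
    (hint₀ : Integrable (fun ξ => r ξ + psiSlope r ξ) muSphere)
    (hint₁ : Integrable
      (fun ξ => (r ξ + psiSlope r ξ) ^ 2 - Complex.normSq (sigmaSlope r ξ)) muSphere)
    (hint₂ : Integrable
      (fun ξ => Complex.normSq (sigmaSlope r ξ) - (r ξ - w / 2 + psiSlope r ξ) ^ 2) muSphere)
    (hineq :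
      0 ≤ ∫ ξ, (Complex.normSq (sigmaSlope r ξ) - (r ξ - w / 2 + psiSlope r ξ) ^ 2) ∂muSphere)
    (A I : ℝ → ℝ)
    (hA : ∀ C, A C =
      ∫ ξ, ((r ξ + C + psiSlope r ξ) ^ 2 - Complex.normSq (sigmaSlope r ξ)) ∂muSphere)
    (hI : ∀ C, I C =
      6 * ((1 / 2) * (w + 2 * C) * A C - (Real.pi / 3) * (w + 2 * C) ^ 3)
        / (Real.pi * (w + 2 * C) ^ 3)) :
    ∀ C₁ C₂ : ℝ, -w / 2 < C₁ → C₁ ≤ C₂ → I C₁ ≤ I C₂ := by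
  have hb : ∫ ξ, (r ξ + psiSlope r ξ) ∂muSphere = 2 * Real.pi * w := by
    apply key_integral w _ hint₀
    intro x hx
    exact rpsi_antisym hr hcw hx
  set a₀ : ℝ := ∫ ξ, ((r ξ + psiSlope r ξ) ^ 2 - Complex.normSq (sigmaSlope r ξ)) ∂muSphere
    with ha₀
  have hA' : ∀ C : ℝ, A C = a₀ + 2 * C * (2 * Real.pi * w) + C^2 * (4 * Real.pi) := by
    intro C
    have hfeq : (fun ξ => (r ξ + C + psiSlope r ξ) ^ 2 - Complex.normSq (sigmaSlope r ξ))
        = fun ξ => ((r ξ + psiSlope r ξ) ^ 2 - Complex.normSq (sigmaSlope r ξ))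
          + ((2 * C) * (r ξ + psiSlope r ξ) + C^2) := by
      funext ξ; ring
    have hadd1 : Integrable (fun ξ => (2 * C) * (r ξ + psiSlope r ξ) + C^2) muSphere :=
      (hint₀.const_mul (2*C)).add (integrable_const _)
    rw [hA C, hfeq, integral_add hint₁ hadd1,
      integral_add (hint₀.const_mul (2*C)) (integrable_const _), integral_const_mul, hb,
      integral_const, measureReal_def, muSphere_univ_toReal]
    simp only [smul_eq_mul]
    ring
  have hka : a₀ ≤ Real.pi * w^2 := by
    have hfeq : (fun ξ => Complex.normSq (sigmaSlope r ξ) - (r ξ - w / 2 + psiSlope r ξ) ^ 2)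
        = fun ξ => (-((r ξ + psiSlope r ξ) ^ 2 - Complex.normSq (sigmaSlope r ξ)))
          + (w * (r ξ + psiSlope r ξ) + (- (w^2/4))) := by
      funext ξ; ring
    have hadd1 : Integrable (fun ξ => w * (r ξ + psiSlope r ξ) + (- (w^2/4))) muSphere :=
      (hint₀.const_mul w).add (integrable_const _)
    have hneg : Integrable
        (fun ξ => -((r ξ + psiSlope r ξ) ^ 2 - Complex.normSq (sigmaSlope r ξ))) muSphere :=
      hint₁.neg
    rw [hfeq, integral_add hneg hadd1,
      integral_add (hint₀.const_mul w) (integrable_const _), integral_const_mul, hb,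
      integral_neg, integral_const, measureReal_def, muSphere_univ_toReal] at hineq
    simp only [smul_eq_mul] at hineq
    nlinarith [Real.pi_pos]
  intro C₁ C₂ hC₁ hC₁₂
  have ht₁ : (0:ℝ) < w + 2 * C₁ := by linarith
  have ht₂ : (0:ℝ) < w + 2 * C₂ := by linarith
  have ht₁₂ : w + 2 * C₁ ≤ w + 2 * C₂ := by linarith
  set k : ℝ := a₀ - Real.pi * w^2 with hk
  have hk0 : k ≤ 0 := by rw [hk]; linarith
  have hIval : ∀ C : ℝ, 0 < w + 2*C →
      I C = 1 + 3 * k / (Real.pi * (w + 2*C)^2) := by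
    intro C htC
    have hAC : A C = Real.pi * (w + 2*C)^2 + k := by
      rw [hA' C, hk]; ring
    rw [hI C, hAC]
    have hπ : Real.pi ≠ 0 := ne_of_gt Real.pi_pos
    field_simp
    ring
  rw [hIval C₁ ht₁, hIval C₂ ht₂]
  have h2 : 3 * k / (Real.pi * (w + 2*C₁)^2) ≤ 3 * k / (Real.pi * (w + 2*C₂)^2) := by
    rw [div_le_div_iff₀ (by positivity) (by positivity)]
    have hsq : (w + 2*C₁)^2 ≤ (w + 2*C₂)^2 := by nlinarith
    have hmul : k * (w + 2*C₂)^2 ≤ k * (w + 2*C₁)^2 := mul_le_mul_of_nonpos_left hsq hk0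
    nlinarith [Real.pi_pos, hmul]
  linarith

end
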